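/- Let H = (V,E) be an intersection-closed hypergraph, let e ∈ E, and let e₀ ⊂ e₁ ⊂ … ⊂ e_l = e be a maximal e-chain in H (i.e., a strict chain of edges ending at e that cannot be refined or extended downward). For each i ∈ [0;l−1], let vᵢ be an arbitrary element of e_{i+1} ∖ eᵢ. Then M_H({v₀,…,v_{l−1}}) = e, where M_H(S) is the intersection of all edges of H containing S. -/

import Mathlib

/-- Prepend `g ⊂ c 0` to a strict chain. -/
lemma prepend_chain {α : Type*} {l : ℕ} (c : Fin (l+1) → Set α)
    (hchain : ∀ i j, i < j → c i ⊂ c j) (g : Set α) (hg : g ⊂ c 0) :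
    ∃ c' : Fin (l+2) → Set α,
      (∀ i j, i < j → c' i ⊂ c' j) ∧ c' (Fin.last (l+1)) = c (Fin.last l) ∧
      ∀ i, c' i = g ∨ ∃ j, c' i = c j := by
  have hmono : ∀ i j : Fin (l+1), i ≤ j → c i ⊆ c j := by
    intro i j hij
    rcases lt_or_eq_of_le hij with h | h
    · exact (hchain i j h).1
    · rw [h]
  refine ⟨fun i => if h : (i : ℕ) = 0 then g else c ⟨(i : ℕ) - 1, by omega⟩, ?_, ?_, ?_⟩
  · intro i j hij
    have hij' : (i : ℕ) < (j : ℕ) := hij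
    by_cases hi : (i : ℕ) = 0
    · simp only [dif_pos hi]
      have hj : ¬ (j : ℕ) = 0 := by omega
      simp only [dif_neg hj]
      exact ssubset_of_ssubset_of_subset hg (hmono 0 _ (by exact Nat.zero_le _))
    · simp only [dif_neg hi]
      have hj : ¬ (j : ℕ) = 0 := by omega
      simp only [dif_neg hj]
      exact hchain _ _ (by exact (by omega : (i:ℕ) - 1 < (j:ℕ) - 1))
  · have h : ¬ ((Fin.last (l+1) : Fin (l+2)) : ℕ) = 0 := by simp
    simp only [dif_neg h]
    congr 1
  · intro i
    by_cases hi : (i : ℕ) = 0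
    · left; simp only [dif_pos hi]
    · right; exact ⟨⟨(i:ℕ)-1, by omega⟩, by simp only [dif_neg hi]⟩

/-- Insert `g` with `c k.castSucc ⊂ g ⊂ c k.succ` into a strict chain. -/
lemma insert_chain {α : Type*} {l : ℕ} (c : Fin (l+1) → Set α)
    (hchain : ∀ i j, i < j → c i ⊂ c j) (k : Fin l) (g : Set α)
    (h1 : c k.castSucc ⊂ g) (h2 : g ⊂ c k.succ) :
    ∃ c' : Fin (l+2) → Set α,
      (∀ i j, i < j → c' i ⊂ c' j) ∧ c' (Fin.last (l+1)) = c (Fin.last l) ∧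
      ∀ i, c' i = g ∨ ∃ j, c' i = c j := by
  have hmono : ∀ i j : Fin (l+1), i ≤ j → c i ⊆ c j := by
    intro i j hij
    rcases lt_or_eq_of_le hij with h | h
    · exact (hchain i j h).1
    · rw [h]
  have hk : (k : ℕ) < l := k.isLt
  have hcast : c k.castSucc = c ⟨(k : ℕ), by omega⟩ := rfl
  have hsucc : c k.succ = c ⟨(k : ℕ) + 1, by omega⟩ := rfl
  refine ⟨fun i => if h : (i : ℕ) ≤ (k : ℕ) then c ⟨(i : ℕ), by omega⟩
      else if h' : (i : ℕ) = (k : ℕ) + 1 then g else c ⟨(i : ℕ) - 1, by omega⟩,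
      ?_, ?_, ?_⟩
  · intro i j hij
    have hij' : (i : ℕ) < (j : ℕ) := hij
    by_cases hi : (i : ℕ) ≤ (k : ℕ)
    · simp only [dif_pos hi]
      by_cases hj : (j : ℕ) ≤ (k : ℕ)
      · simp only [dif_pos hj]
        exact hchain _ _ (by exact hij')
      · simp only [dif_neg hj]
        by_cases hj' : (j : ℕ) = (k : ℕ) + 1
        · simp only [dif_pos hj']
          refine ssubset_of_subset_of_ssubset ?_ h1
          rw [hcast]
          exact hmono _ _ (by exact hi)
        · simp only [dif_neg hj']
          exact hchain _ _ (by exact (by omega : (i:ℕ) < (j:ℕ) - 1))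
    · simp only [dif_neg hi]
      have hj : ¬ (j : ℕ) ≤ (k : ℕ) := by omega
      simp only [dif_neg hj]
      by_cases hi' : (i : ℕ) = (k : ℕ) + 1
      · simp only [dif_pos hi']
        have hj' : ¬ (j : ℕ) = (k : ℕ) + 1 := by omega
        simp only [dif_neg hj']
        refine ssubset_of_ssubset_of_subset h2 ?_
        rw [hsucc]
        exact hmono _ _ (by exact (by omega : (k:ℕ) + 1 ≤ (j:ℕ) - 1))
      · simp only [dif_neg hi']
        have hj' : ¬ (j : ℕ) = (k : ℕ) + 1 := by omega
        simp only [dif_neg hj']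
        exact hchain _ _ (by exact (by omega : (i:ℕ) - 1 < (j:ℕ) - 1))
  · have h : ¬ ((Fin.last (l+1) : Fin (l+2)) : ℕ) ≤ (k : ℕ) := by simp
    have h' : ¬ ((Fin.last (l+1) : Fin (l+2)) : ℕ) = (k : ℕ) + 1 := by simp; omega
    simp only [dif_neg h, dif_neg h']
    congr 1
  · intro i
    by_cases hi : (i : ℕ) ≤ (k : ℕ)
    · right; exact ⟨⟨(i:ℕ), by omega⟩, by simp [dif_pos hi]⟩
    · by_cases hi' : (i : ℕ) = (k : ℕ) + 1
      · left; simp [dif_neg hi, dif_pos hi']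
      · right; exact ⟨⟨(i:ℕ)-1, by omega⟩, by simp [dif_neg hi, dif_neg hi']⟩

/-- `M E S` is the intersection of all edges of `E` containing `S`
(equal to `univ` when there is no such edge). -/
def M {α : Type*} (E : Set (Set α)) (S : Set α) : Set α :=
  ⋂₀ { e | e ∈ E ∧ S ⊆ e }

/-- Lemma 3: in an intersection-closed hypergraph, if `c 0 ⊂ … ⊂ c l = e` is a
maximal `e`-chain and `v i ∈ c (i+1) ∖ c i`, then `M_H({v 0,…,v (l-1)}) = e`. -/
theorem stmt_6 {α : Type*} [Fintype α] (E : Set (Set α))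
    (hcl : Set.univ ∈ E ∧ ∀ a ∈ E, ∀ b ∈ E, a ∩ b ∈ E)
    (e : Set α) (he : e ∈ E) (l : ℕ) (c : Fin (l+1) → Set α)
    (hcE : ∀ i, c i ∈ E) (hchain : ∀ i j, i < j → c i ⊂ c j)
    (hlast : c (Fin.last l) = e)
    (hmax : ∀ (l' : ℕ) (c' : Fin (l'+1) → Set α),
      (∀ i, c' i ∈ E) → (∀ i j, i < j → c' i ⊂ c' j) → c' (Fin.last l') = e → l' ≤ l)
    (v : Fin l → α) (hv : ∀ i : Fin l, v i ∈ c i.succ \ c i.castSucc) :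
    M E (Set.range v) = e := by
  have hmono : ∀ i j : Fin (l+1), i ≤ j → c i ⊆ c j := by
    intro i j hij
    rcases lt_or_eq_of_le hij with h | h
    · exact (hchain i j h).1
    · rw [h]
  have hrange : Set.range v ⊆ e := by
    rintro x ⟨i, rfl⟩
    rw [← hlast]
    exact hmono i.succ (Fin.last l) (Fin.le_last _) (hv i).1
  apply subset_antisymm
  · exact Set.sInter_subset_of_mem ⟨he, hrange⟩
  · intro x hx
    rw [M, Set.mem_sInter]
    rintro f ⟨hfE, hvf⟩
    have key : ∀ i : Fin (l+1), c i ⊆ f := by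
      intro i
      induction i using Fin.induction with
      | zero =>
        by_contra h
        have hg2 : c 0 ∩ f ⊂ c 0 := by
          refine ⟨Set.inter_subset_left, fun hle => h fun y hy => (hle hy).2⟩
        obtain ⟨c', hc'chain, hc'last, hc'mem⟩ := prepend_chain c hchain _ hg2
        have : l + 1 ≤ l := by
          refine hmax (l+1) c' (fun i => ?_) hc'chain (by rw [hc'last, hlast])
          rcases hc'mem i with h' | ⟨j, h'⟩
          · rw [h']; exact hcl.2 _ (hcE 0) _ hfE
          · rw [h']; exact hcE j
        omega
      | succ i ih =>
        set g := c i.succ ∩ f with hgdef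
        have hgE : g ∈ E := hcl.2 _ (hcE _) _ hfE
        have hvi : v i ∈ g := ⟨(hv i).1, hvf ⟨i, rfl⟩⟩
        have h1 : c i.castSucc ⊂ g := by
          refine ⟨Set.subset_inter (hmono _ _ (le_of_lt Fin.castSucc_lt_succ)) ih,
            fun hle => (hv i).2 (hle hvi)⟩
        by_cases heq : g = c i.succ
        · rw [← heq]; exact Set.inter_subset_right
        · have h2 : g ⊂ c i.succ :=
            ⟨Set.inter_subset_left, fun hle => heq (subset_antisymm Set.inter_subset_left hle)⟩
          obtain ⟨c', hc'chain, hc'last, hc'mem⟩ := insert_chain c hchain i g h1 h2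
          have : l + 1 ≤ l := by
            refine hmax (l+1) c' (fun j => ?_) hc'chain (by rw [hc'last, hlast])
            rcases hc'mem j with h' | ⟨j', h'⟩
            · rw [h']; exact hgE
            · rw [h']; exact hcE j'
          omega
    rw [← hlast] at hx
    exact key (Fin.last l) hx
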